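/- Under the same setup: X a K-component identity-covariance GMM with centers μ_k*, weights π_k, λ ∈ (0,1/2), R_min > √((2/(1−2λ)) log θ), and μ ∈ U_λ. Then E_{X~N(μ_i*, I_d)}[w_i(X,μ)] ≥ 1 − (K−1)(1+θ) e^{-c(λ) R_i²}, where R_i = min_{j≠i} ‖μ_j*−μ_i*‖ and c(λ) = (1/8)((1−2λ)/(1+2λ))². -/

import Mathlib

open MeasureTheory Real

/-- Density of the `N(m, I_d)` Gaussian on `ℝ^d`. -/
noncomputable def gaussDensity {d : ℕ} (m x : EuclideanSpace ℝ (Fin d)) : ℝ :=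
  (2 * Real.pi) ^ (-(d : ℝ) / 2) * Real.exp (-‖x - m‖ ^ 2 / 2)

/-- EM posterior membership weight of component `j` given candidate centers `μ`. -/
noncomputable def wEM {d K : ℕ} (p : Fin K → ℝ) (μ : Fin K → EuclideanSpace ℝ (Fin d))
    (j : Fin K) (x : EuclideanSpace ℝ (Fin d)) : ℝ :=
  p j * Real.exp (-‖x - μ j‖ ^ 2 / 2) / ∑ k, p k * Real.exp (-‖x - μ k‖ ^ 2 / 2)

/-- `R_k = min_{j ≠ k} ‖μ_j* - μ_k*‖`. -/
noncomputable def Rsep {d K : ℕ} (μs : Fin K → EuclideanSpace ℝ (Fin d)) (k : Fin K) : ℝ :=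
  sInf {r | ∃ j, j ≠ k ∧ r = ‖μs j - μs k‖}

/-- `R_min = min_{i ≠ j} ‖μ_i* - μ_j*‖`. -/
noncomputable def Rmin {d K : ℕ} (μs : Fin K → EuclideanSpace ℝ (Fin d)) : ℝ :=
  sInf {r | ∃ i j, i ≠ j ∧ r = ‖μs i - μs j‖}

/-- `θ = π_max / π_min`. -/
noncomputable def thetaRatio {K : ℕ} (p : Fin K → ℝ) : ℝ :=
  sSup (Set.range p) / sInf (Set.range p)

/-- The exponent constant `c(λ)`. -/
noncomputable def clam (lam : ℝ) : ℝ := (1 / 8) * ((1 - 2 * lam) / (1 + 2 * lam)) ^ 2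

namespace Stmt7Aux

lemma gauss_pos {d : ℕ} (m x : EuclideanSpace ℝ (Fin d)) : 0 < gaussDensity m x := by
  unfold gaussDensity; positivity

lemma gauss_integrable {d : ℕ} (m : EuclideanSpace ℝ (Fin d)) :
    Integrable (gaussDensity m) := by
  unfold gaussDensity
  apply Integrable.const_mul
  have h : Integrable (fun x : EuclideanSpace ℝ (Fin d) => Real.exp (-(1/2) * ‖x‖^2)) := by
    have := (GaussianFourier.integrable_cexp_neg_mul_sq_norm_add (V := EuclideanSpace ℝ (Fin d))
      (b := (1/2 : ℂ)) (by norm_num) 0 0).norm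
    convert this using 2 with x
    simp [Complex.norm_exp]
    norm_cast
  have := h.comp_sub_right m
  convert this using 2 with x
  ring_nf

lemma gauss_integral {d : ℕ} (m : EuclideanSpace ℝ (Fin d)) : ∫ x, gaussDensity m x = 1 := by
  unfold gaussDensity
  rw [integral_const_mul]
  have h1 : ∫ x : EuclideanSpace ℝ (Fin d), Real.exp (-‖x - m‖^2 / 2)
      = ∫ x : EuclideanSpace ℝ (Fin d), Real.exp (-‖x‖^2 / 2) := by
    have := integral_add_right_eq_self (μ := volume)
      (fun x : EuclideanSpace ℝ (Fin d) => Real.exp (-‖x‖^2 / 2)) (-m)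
    rw [← this]
    congr 1 with x
  rw [h1]
  have h2 : ∫ x : EuclideanSpace ℝ (Fin d), Real.exp (-‖x‖^2 / 2)
      = (π / (1/2 : ℝ)) ^ ((d : ℝ) / 2) := by
    have := GaussianFourier.integral_rexp_neg_mul_sq_norm
      (V := EuclideanSpace ℝ (Fin d)) (b := 1/2) (by norm_num)
    rw [finrank_euclideanSpace_fin] at this
    rw [← this]
    congr 1 with x
    ring_nf
  rw [h2]
  have hpi : π / (1/2 : ℝ) = 2 * π := by ring
  rw [hpi, ← Real.rpow_add (by positivity),
    show (-(d:ℝ)/2 + (d:ℝ)/2) = 0 by ring, Real.rpow_zero]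

end Stmt7Aux

set_option maxHeartbeats 1000000 in
open Stmt7Aux in
theorem stmt7 {d K : ℕ} (μs μ : Fin K → EuclideanSpace ℝ (Fin d)) (p : Fin K → ℝ)
    (lam : ℝ) (hl1 : 0 < lam) (hl2 : lam < 1 / 2)
    (hp : ∀ k, 0 < p k) (hps : ∑ k, p k = 1)
    (hsep : Rmin μs > Real.sqrt ((2 / (1 - 2 * lam)) * Real.log (thetaRatio p)))
    (hU : ∀ k, ‖μ k - μs k‖ ≤ lam * Rsep μs k) :
    ∀ i, (∫ x, wEM p μ i x * gaussDensity (μs i) x) ≥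
      1 - ((K : ℝ) - 1) * (1 + thetaRatio p) *
        Real.exp (-(clam lam) * (Rsep μs i) ^ 2) := by
  intro i
  haveI : Nonempty (Fin K) := ⟨i⟩
  set θ := thetaRatio p with hθdef
  have hS : ∀ x : EuclideanSpace ℝ (Fin d), 0 < ∑ k, p k * Real.exp (-‖x - μ k‖ ^ 2 / 2) := by
    intro x
    exact Finset.sum_pos (fun k _ => mul_pos (hp k) (Real.exp_pos _)) ⟨i, Finset.mem_univ i⟩
  have hw_pos : ∀ j x, 0 < wEM p μ j x := by
    intro j x
    unfold wEM
    exact div_pos (mul_pos (hp j) (Real.exp_pos _)) (hS x)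
  have hw_le_one : ∀ j x, wEM p μ j x ≤ 1 := by
    intro j x
    unfold wEM
    rw [div_le_one (hS x)]
    exact Finset.single_le_sum (f := fun k => p k * Real.exp (-‖x - μ k‖ ^ 2 / 2))
      (fun k _ => (mul_pos (hp k) (Real.exp_pos _)).le) (Finset.mem_univ j)
  have hw_sum : ∀ x, ∑ j, wEM p μ j x = 1 := by
    intro x
    unfold wEM
    rw [← Finset.sum_div, div_self (hS x).ne']
  have hw_cont : ∀ j, Continuous (wEM p μ j) := by
    intro j
    unfold wEM
    apply Continuous.div
    · fun_prop
    · fun_prop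
    · exact fun x => (hS x).ne'
  have hInt : ∀ j, Integrable (fun x => wEM p μ j x * gaussDensity (μs i) x) := by
    intro j
    apply (gauss_integrable (μs i)).mono'
      (((hw_cont j).mul (by unfold gaussDensity; fun_prop)).aestronglyMeasurable)
    filter_upwards with x
    have h1 := hw_pos j x
    have h2 := hw_le_one j x
    have h3 := gauss_pos (μs i) x
    rw [Pi.mul_apply, Real.norm_eq_abs, abs_of_nonneg (by nlinarith)]
    nlinarith
  -- facts about θ
  have hrange_ne : (Set.range p).Nonempty := Set.range_nonempty p
  have hrange_fin : (Set.range p).Finite := Set.finite_range p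
  have hInfpos : 0 < sInf (Set.range p) := by
    obtain ⟨k, hk⟩ := hrange_ne.csInf_mem hrange_fin
    exact hk ▸ hp k
  have hθ1 : 1 ≤ θ := by
    rw [hθdef, thetaRatio, le_div_iff₀ hInfpos, one_mul]
    exact csInf_le_csSup hrange_ne hrange_fin.bddBelow hrange_fin.bddAbove
  have hθpos : 0 < θ := lt_of_lt_of_le one_pos hθ1
  have hpθ : ∀ j : Fin K, p j / p i ≤ θ := by
    intro j
    rw [hθdef, thetaRatio]
    exact div_le_div₀ (le_trans (hp j).le (le_csSup hrange_fin.bddAbove ⟨j, rfl⟩))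
      (le_csSup hrange_fin.bddAbove ⟨j, rfl⟩) hInfpos
      (csInf_le hrange_fin.bddBelow ⟨i, rfl⟩)
  -- the key per-component bound
  have key : ∀ j ∈ Finset.univ.erase i,
      (∫ x, wEM p μ j x * gaussDensity (μs i) x)
        ≤ θ * Real.exp (-(clam lam) * (Rsep μs i)^2) := by
    intro j hj
    have hji : j ≠ i := Finset.ne_of_mem_erase hj
    set D := ‖μs j - μs i‖ with hD
    have hD0 : 0 ≤ D := norm_nonneg _
    set Ri := Rsep μs i with hRidef
    set Rj := Rsep μs j with hRjdef
    have hbd : ∀ k : Fin K, BddBelow {r | ∃ j', j' ≠ k ∧ r = ‖μs j' - μs k‖} :=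
      fun k => ⟨0, by rintro r ⟨j', _, rfl⟩; positivity⟩
    have hRiD : Ri ≤ D := csInf_le (hbd i) ⟨j, hji, rfl⟩
    have hRjD : Rj ≤ D := by
      have h := csInf_le (hbd j) (⟨i, hji.symm, rfl⟩ :
        ‖μs i - μs j‖ ∈ {r | ∃ j', j' ≠ j ∧ r = ‖μs j' - μs j‖})
      rwa [norm_sub_rev] at h
    have hRi0 : 0 ≤ Ri := Real.sInf_nonneg (by rintro r ⟨j', _, rfl⟩; positivity)
    have hRj0 : 0 ≤ Rj := Real.sInf_nonneg (by rintro r ⟨j', _, rfl⟩; positivity)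
    set u := 1 - 2*lam with hu
    have hu0 : 0 < u := by rw [hu]; linarith
    have hu1 : u < 1 := by rw [hu]; linarith
    have h2u : 0 < 2 - u := by linarith
    set β := u / (2*(2-u)^2) with hβ
    have hβ0 : 0 < β := div_pos hu0 (by positivity)
    have hβ1 : β ≤ 1 := by
      rw [hβ, div_le_one (by positivity)]
      nlinarith [sq_nonneg (1-u), hu1, hu0]
    set v := μ j - μ i with hv
    set m := (‖μs i - μ i‖^2 - ‖μs i - μ j‖^2)/2 with hm
    clear_value D Ri Rj u β v m
    have hiU : ‖μs i - μ i‖ ≤ lam * Ri := by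
      rw [norm_sub_rev, hRidef]; exact hU i
    have hjU : ‖μ j - μs j‖ ≤ lam * Rj := by rw [hRjdef]; exact hU j
    have hjU2 : D - lam * Rj ≤ ‖μs i - μ j‖ := by
      have h1 : ‖μs i - μs j‖ ≤ ‖μs i - μ j‖ + ‖μ j - μs j‖ := by
        have he : μs i - μs j = (μs i - μ j) + (μ j - μs j) := by abel
        rw [he]; exact norm_add_le _ _
      have hDD : D = ‖μs i - μs j‖ := by rw [hD]; exact norm_sub_rev _ _
      linarith
    have hmub : m ≤ -u * D^2 / 2 := by
      have hA : ‖μs i - μ i‖ ≤ lam * D :=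
        le_trans hiU (mul_le_mul_of_nonneg_left hRiD hl1.le)
      have hB : (1 - lam) * D ≤ ‖μs i - μ j‖ := by
        have := mul_le_mul_of_nonneg_left hRjD hl1.le
        linarith
      have hA2 : ‖μs i - μ i‖^2 ≤ (lam*D)^2 := pow_le_pow_left₀ (norm_nonneg _) hA 2
      have hB2 : ((1-lam)*D)^2 ≤ ‖μs i - μ j‖^2 :=
        pow_le_pow_left₀ (by nlinarith [hD0] : (0:ℝ) ≤ (1-lam)*D) hB 2
      rw [hm, hu]
      linarith [hA2, hB2]
    have hvle : ‖v‖ ≤ (2-u) * D := by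
      have he : v = (μ j - μs j) + (μs j - μs i) + (μs i - μ i) := by rw [hv]; abel
      have h1 : ‖v‖ ≤ ‖μ j - μs j‖ + ‖μs j - μs i‖ + ‖μs i - μ i‖ := by
        rw [he]; exact norm_add₃_le
      have h2 := mul_le_mul_of_nonneg_left hRjD hl1.le
      have h3 := mul_le_mul_of_nonneg_left hRiD hl1.le
      rw [hu]
      linarith
    have hcval : clam lam = u^2/(8*(2-u)^2) := by
      unfold clam
      rw [show 1 + 2*lam = 2 - u by rw [hu]; ring, show 1 - 2*lam = u from hu.symm]
      field_simp
    have hexp : β*m + β^2*‖v‖^2/2 ≤ -(clam lam) * Ri^2 := by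
      have h1 : β*m ≤ β*(-u*D^2/2) := mul_le_mul_of_nonneg_left hmub hβ0.le
      have h2 : β^2*‖v‖^2/2 ≤ β^2*((2-u)*D)^2/2 := by
        have := mul_le_mul_of_nonneg_left
          (pow_le_pow_left₀ (norm_nonneg v) hvle 2) (sq_nonneg β)
        linarith
      have h3 : β*(-u*D^2/2) + β^2*((2-u)*D)^2/2 = -(u^2/(8*(2-u)^2))*D^2 := by
        rw [hβ]; field_simp; ring
      have h4 : Ri^2 ≤ D^2 := pow_le_pow_left₀ hRi0 hRiD 2
      have h5 : 0 ≤ u^2/(8*(2-u)^2) := by positivity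
      rw [hcval]
      linarith [mul_le_mul_of_nonneg_left h4 h5]
    set C := θ^β * Real.exp (β*m + β^2*‖v‖^2/2) with hC
    have hpoint : ∀ x, wEM p μ j x * gaussDensity (μs i) x
        ≤ C * gaussDensity (μs i + β • v) x := by
      intro x
      have hq : wEM p μ j x ≤ ((p j / p i) *
          (Real.exp (-‖x - μ j‖^2/2) / Real.exp (-‖x - μ i‖^2/2))) ^ β := by
        have hw1 : wEM p μ j x ≤ (p j * Real.exp (-‖x - μ j‖^2/2))
            / (p i * Real.exp (-‖x - μ i‖^2/2)) := by
          unfold wEM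
          apply div_le_div_of_nonneg_left (mul_pos (hp j) (Real.exp_pos _)).le
            (mul_pos (hp i) (Real.exp_pos _))
          exact Finset.single_le_sum (f := fun k => p k * Real.exp (-‖x - μ k‖ ^ 2 / 2))
            (fun k _ => (mul_pos (hp k) (Real.exp_pos _)).le) (Finset.mem_univ i)
        calc wEM p μ j x = (wEM p μ j x) ^ (1:ℝ) := (Real.rpow_one _).symm
          _ ≤ (wEM p μ j x) ^ β :=
              Real.rpow_le_rpow_of_exponent_ge (hw_pos j x) (hw_le_one j x) hβ1
          _ ≤ ((p j * Real.exp (-‖x - μ j‖^2/2))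
              / (p i * Real.exp (-‖x - μ i‖^2/2))) ^ β :=
              Real.rpow_le_rpow (hw_pos j x).le hw1 hβ0.le
          _ = ((p j / p i) * (Real.exp (-‖x - μ j‖^2/2) / Real.exp (-‖x - μ i‖^2/2))) ^ β := by
              rw [div_mul_div_comm]
      have hsplit : ((p j / p i) * (Real.exp (-‖x - μ j‖^2/2) / Real.exp (-‖x - μ i‖^2/2))) ^ β
          = (p j / p i)^β * Real.exp (β * ((‖x - μ i‖^2 - ‖x - μ j‖^2)/2)) := by
        rw [Real.mul_rpow (div_pos (hp j) (hp i)).le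
          (div_pos (Real.exp_pos _) (Real.exp_pos _)).le, ← Real.exp_sub,
          show (-‖x - μ j‖^2/2 - (-‖x - μ i‖^2/2)) = ((‖x - μ i‖^2 - ‖x - μ j‖^2)/2) by ring,
          mul_comm β, Real.exp_mul]
      have hexpid : β * ((‖x - μ i‖^2 - ‖x - μ j‖^2)/2) + (-‖x - μs i‖^2/2)
          = (β*m + β^2*‖v‖^2/2) + (-‖x - (μs i + β • v)‖^2/2) := by
        have e1 : ‖x - μ i‖^2 = ‖x - μs i‖^2
            + 2*(inner ℝ (x - μs i) (μs i - μ i) : ℝ) + ‖μs i - μ i‖^2 := by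
          rw [show x - μ i = (x - μs i) + (μs i - μ i) by abel]
          exact norm_add_sq_real _ _
        have e2 : ‖x - μ j‖^2 = ‖x - μs i‖^2
            + 2*(inner ℝ (x - μs i) (μs i - μ j) : ℝ) + ‖μs i - μ j‖^2 := by
          rw [show x - μ j = (x - μs i) + (μs i - μ j) by abel]
          exact norm_add_sq_real _ _
        have e3 : ‖x - (μs i + β • v)‖^2 = ‖x - μs i‖^2
            - 2*(β * (inner ℝ (x - μs i) v : ℝ)) + β^2*‖v‖^2 := by
          rw [show x - (μs i + β • v) = (x - μs i) - β • v by abel,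
            norm_sub_sq_real, real_inner_smul_right, norm_smul,
            Real.norm_eq_abs, abs_of_pos hβ0]
          ring
        have e4 : (inner ℝ (x - μs i) (μs i - μ i) : ℝ) - (inner ℝ (x - μs i) (μs i - μ j) : ℝ)
            = (inner ℝ (x - μs i) v : ℝ) := by
          rw [← inner_sub_right]
          congr 1
          rw [hv]; abel
        rw [e1, e2, e3, hm]
        linear_combination β * e4
      have hgauss : Real.exp (β * ((‖x - μ i‖^2 - ‖x - μ j‖^2)/2)) * gaussDensity (μs i) x
          = Real.exp (β*m + β^2*‖v‖^2/2) * gaussDensity (μs i + β • v) x := by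
        unfold gaussDensity
        have hmul : ∀ A B : ℝ, Real.exp A * ((2*π)^(-(d:ℝ)/2) * Real.exp B)
            = (2*π)^(-(d:ℝ)/2) * Real.exp (A+B) := by
          intro A B; rw [Real.exp_add]; ring
        rw [hmul, hmul, hexpid]
      have hgpos := gauss_pos (μs i) x
      have hgpos2 := gauss_pos (μs i + β • v) x
      calc wEM p μ j x * gaussDensity (μs i) x
          ≤ ((p j / p i) * (Real.exp (-‖x - μ j‖^2/2) / Real.exp (-‖x - μ i‖^2/2))) ^ β
              * gaussDensity (μs i) x := mul_le_mul_of_nonneg_right hq hgpos.le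
        _ = (p j / p i)^β * (Real.exp (β * ((‖x - μ i‖^2 - ‖x - μ j‖^2)/2))
              * gaussDensity (μs i) x) := by rw [hsplit]; ring
        _ ≤ θ^β * (Real.exp (β * ((‖x - μ i‖^2 - ‖x - μ j‖^2)/2))
              * gaussDensity (μs i) x) := by
            apply mul_le_mul_of_nonneg_right _
              (mul_pos (Real.exp_pos _) (gauss_pos (μs i) x)).le
            exact Real.rpow_le_rpow (div_pos (hp j) (hp i)).le (hpθ j) hβ0.le
        _ = θ^β * (Real.exp (β*m + β^2*‖v‖^2/2) * gaussDensity (μs i + β • v) x) := by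
            rw [hgauss]
        _ = C * gaussDensity (μs i + β • v) x := by rw [hC]; ring
    have hIle : (∫ x, wEM p μ j x * gaussDensity (μs i) x) ≤ C := by
      have h := integral_mono (hInt j) ((gauss_integrable (μs i + β • v)).const_mul C)
        hpoint
      rwa [integral_const_mul, gauss_integral, mul_one] at h
    refine le_trans hIle ?_
    rw [hC]
    have h5 : θ^β ≤ θ := by
      calc θ^β ≤ θ^(1:ℝ) := Real.rpow_le_rpow_of_exponent_le hθ1 hβ1
        _ = θ := Real.rpow_one θ
    have h6 : Real.exp (β*m + β^2*‖v‖^2/2) ≤ Real.exp (-(clam lam) * Ri^2) :=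
      Real.exp_le_exp.mpr hexp
    exact mul_le_mul h5 h6 (Real.exp_pos _).le hθpos.le
  -- assembly
  have hsum_int : ∑ j, (∫ x, wEM p μ j x * gaussDensity (μs i) x) = 1 := by
    rw [← integral_finset_sum _ (fun j _ => hInt j)]
    calc (∫ x, ∑ j, wEM p μ j x * gaussDensity (μs i) x)
        = ∫ x, gaussDensity (μs i) x := by
          congr 1; funext x; rw [← Finset.sum_mul, hw_sum, one_mul]
      _ = 1 := gauss_integral _
  have hsplit2 : (∫ x, wEM p μ i x * gaussDensity (μs i) x)
      = 1 - ∑ j ∈ Finset.univ.erase i, (∫ x, wEM p μ j x * gaussDensity (μs i) x) := by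
    rw [← hsum_int, ← Finset.add_sum_erase _ _ (Finset.mem_univ i)]
    ring
  rw [ge_iff_le, hsplit2, sub_le_sub_iff_left]
  have hK1 : (1:ℝ) ≤ (K:ℝ) := by exact_mod_cast Nat.one_le_iff_ne_zero.mpr (Fin.pos i).ne'
  calc ∑ j ∈ Finset.univ.erase i, (∫ x, wEM p μ j x * gaussDensity (μs i) x)
      ≤ ∑ _j ∈ Finset.univ.erase i, θ * Real.exp (-(clam lam) * (Rsep μs i)^2) :=
        Finset.sum_le_sum key
    _ = ((Finset.univ.erase i).card : ℝ) * (θ * Real.exp (-(clam lam) * (Rsep μs i)^2)) := by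
        rw [Finset.sum_const, nsmul_eq_mul]
    _ = ((K:ℝ) - 1) * (θ * Real.exp (-(clam lam) * (Rsep μs i)^2)) := by
        rw [Finset.card_erase_of_mem (Finset.mem_univ i), Finset.card_univ, Fintype.card_fin]
        congr 1
        push_cast [Nat.cast_sub (Nat.one_le_iff_ne_zero.mpr (Fin.pos i).ne')]
        ring
    _ ≤ ((K:ℝ) - 1) * (1 + θ) * Real.exp (-(clam lam) * (Rsep μs i)^2) := by
        have he := (Real.exp_pos (-(clam lam) * (Rsep μs i)^2)).le
        rw [mul_assoc]
        apply mul_le_mul_of_nonneg_left _ (by linarith : (0:ℝ) ≤ (K:ℝ) - 1)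
        nlinarith [he]
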